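/- Let x₋ := (x − |x|)/2 = min(x, 0). For every a ∈ ℝ with a ≠ 0 there exists ε̄ ∈ (0, 1) such that for every ε ∈ [0, ε̄] there exist η, b ∈ ℝ with 1 − εη > 0 and a twice differentiable function x : ℝ → ℝ satisfying x''(θ) + (1 − εη)x(θ) + ε(1 − εη)(x(θ))₋ = 0 for all θ ∈ ℝ, x(0) = a, x'(0) = εb, and x(θ + 2π) = x(θ) for all θ ∈ ℝ. Consequently, x̃(t) := x(t/√(1 − εη)) is a nonconstant periodic solution of x̃''(t) + x̃(t) + ε (x̃(t))₋ = 0 of period 2π√(1 − εη). -/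

import Mathlib

open Real

/-! Auxiliary machinery: periodic piecewise functions made of two smooth pieces. -/

noncomputable def frp (θ : ℝ) : ℝ := 2*π*Int.fract (θ/(2*π))

noncomputable def pw (c : ℝ) (F G : ℝ → ℝ) (θ : ℝ) : ℝ :=
  if frp θ < c then F (frp θ) else G (frp θ)

lemma frp_nonneg (θ : ℝ) : 0 ≤ frp θ :=
  mul_nonneg (by positivity) (Int.fract_nonneg _)

lemma frp_lt (θ : ℝ) : frp θ < 2*π := by
  have h1 := Int.fract_lt_one (θ/(2*π))
  have h2 : (0:ℝ) < 2*π := by positivity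
  calc 2*π*Int.fract (θ/(2*π)) < 2*π*1 := (mul_lt_mul_iff_right₀ h2).2 h1
  _ = 2*π := by ring

lemma frp_sub_int (θ : ℝ) (k : ℤ) : frp (θ - 2*π*(k:ℝ)) = frp θ := by
  unfold frp
  have hπ : (2:ℝ)*π ≠ 0 := by positivity
  rw [show (θ - 2*π*(k:ℝ))/(2*π) = θ/(2*π) - (k:ℝ) by field_simp, Int.fract_sub_intCast]

lemma frp_add (θ : ℝ) : frp (θ + 2*π) = frp θ := by
  unfold frp
  have hπ : (2:ℝ)*π ≠ 0 := by positivity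
  rw [show (θ + 2*π)/(2*π) = θ/(2*π) + 1 by field_simp, Int.fract_add_one]

lemma frp_eq_self {θ : ℝ} (h0 : 0 ≤ θ) (h2 : θ < 2*π) : frp θ = θ := by
  unfold frp
  have hπ : (0:ℝ) < 2*π := by positivity
  rw [Int.fract_eq_self.2 ⟨div_nonneg h0 hπ.le, (div_lt_one hπ).2 h2⟩]
  field_simp

lemma frp_spec (θ : ℝ) : frp θ = θ - 2*π*((⌊θ/(2*π)⌋ : ℤ) : ℝ) := by
  unfold frp
  rw [← Int.self_sub_floor]
  have hπ : (2:ℝ)*π ≠ 0 := by positivity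
  field_simp

lemma pw_eq_left {c : ℝ} (F G : ℝ → ℝ) {s : ℝ} (h0 : 0 ≤ s) (hs : s < c) (h2 : s < 2*π) :
    pw c F G s = F s := by
  unfold pw; rw [frp_eq_self h0 h2]; exact if_pos hs

lemma pw_eq_right {c : ℝ} (F G : ℝ → ℝ) {s : ℝ} (h0 : 0 ≤ s) (hs : c ≤ s) (h2 : s < 2*π) :
    pw c F G s = G s := by
  unfold pw; rw [frp_eq_self h0 h2]; exact if_neg (not_lt.2 hs)

lemma pw_sub_int (c : ℝ) (F G : ℝ → ℝ) (θ : ℝ) (k : ℤ) :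
    pw c F G (θ - 2*π*(k:ℝ)) = pw c F G θ := by
  unfold pw; rw [frp_sub_int]

lemma pw_periodic (c : ℝ) (F G : ℝ → ℝ) (θ : ℝ) :
    pw c F G (θ + 2*π) = pw c F G θ := by
  unfold pw; rw [frp_add]

lemma pw_spec (c : ℝ) (θ : ℝ) : ∃ t, 0 ≤ t ∧ t < 2*π ∧
    ((t < c ∧ ∀ F G : ℝ → ℝ, pw c F G θ = F t) ∨
     (c ≤ t ∧ ∀ F G : ℝ → ℝ, pw c F G θ = G t)) := by
  refine ⟨frp θ, frp_nonneg θ, frp_lt θ, ?_⟩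
  by_cases h : frp θ < c
  · exact Or.inl ⟨h, fun F G => if_pos h⟩
  · exact Or.inr ⟨not_lt.1 h, fun F G => if_neg h⟩

lemma pw_hasDerivAt {c : ℝ} (hc0 : 0 < c) (hc2 : c < 2*π)
    {F G F' G' : ℝ → ℝ}
    (hF : ∀ t, HasDerivAt F (F' t) t) (hG : ∀ t, HasDerivAt G (G' t) t)
    (hFGc : F c = G c) (hFGc' : F' c = G' c)
    (hGF0 : G (2*π) = F 0) (hGF0' : G' (2*π) = F' 0) :
    ∀ θ, HasDerivAt (pw c F G) (pw c F' G' θ) θ := by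
  have hπ : (0:ℝ) < 2*π := by positivity
  have main : ∀ τ, 0 ≤ τ → τ < 2*π → HasDerivAt (pw c F G) (pw c F' G' τ) τ := by
    intro τ h0 h2
    rcases eq_or_lt_of_le h0 with h0' | h0pos
    · -- junction at 0
      subst h0'
      have hl : HasDerivWithinAt (pw c F G) (G' (2*π)) (Set.Icc (c - 2*π) 0) 0 := by
        have hG2 : HasDerivAt (fun s => G (s + 2*π)) (G' (2*π)) 0 := by
          have hin : HasDerivAt (fun z : ℝ => z + 2*π) 1 0 := by
            simpa using (hasDerivAt_id (0:ℝ)).add_const (2*π)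
          have h := (hG (0 + 2*π)).comp (0:ℝ) hin
          rw [zero_add, mul_one] at h
          exact h
        refine hG2.hasDerivWithinAt.congr ?_ ?_
        · intro s hs
          rcases lt_or_eq_of_le hs.2 with h | h
          · rw [← pw_periodic c F G s]
            exact pw_eq_right F G (by linarith [hs.1]) (by linarith [hs.1]) (by linarith)
          · subst h
            rw [pw_eq_left F G le_rfl hc0 hπ, ← hGF0, zero_add]
        · rw [pw_eq_left F G le_rfl hc0 hπ, ← hGF0, zero_add]
      have hr : HasDerivWithinAt (pw c F G) (F' 0) (Set.Ico 0 c) 0 := by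
        refine (hF 0).hasDerivWithinAt.congr ?_ ?_
        · intro s hs; exact pw_eq_left F G hs.1 hs.2 (lt_trans hs.2 hc2)
        · exact pw_eq_left F G le_rfl hc0 hπ
      rw [hGF0'] at hl
      have hu := hl.union hr
      rw [Set.Icc_union_Ico_eq_Ico (by linarith) hc0] at hu
      rw [pw_eq_left F' G' le_rfl hc0 hπ]
      exact hu.hasDerivAt (Filter.mem_of_superset
        (Ioo_mem_nhds (by linarith) hc0) Set.Ioo_subset_Ico_self)
    rcases lt_trichotomy τ c with hlt | heq | hgt
    · -- interior of first piece
      have hmem : Set.Ioo (0:ℝ) c ∈ nhds τ := isOpen_Ioo.mem_nhds ⟨h0pos, hlt⟩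
      have heqn : pw c F G =ᶠ[nhds τ] F := by
        filter_upwards [hmem] with s hs
        exact pw_eq_left F G hs.1.le hs.2 (lt_trans hs.2 hc2)
      rw [pw_eq_left F' G' h0pos.le hlt (lt_trans hlt hc2)]
      exact (hF τ).congr_of_eventuallyEq heqn
    · -- junction at c
      rw [heq]
      have hl : HasDerivWithinAt (pw c F G) (F' c) (Set.Icc 0 c) c := by
        refine (hF c).hasDerivWithinAt.congr ?_ ?_
        · intro s hs
          rcases lt_or_eq_of_le hs.2 with h | h
          · exact pw_eq_left F G hs.1 h (lt_trans h hc2)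
          · subst h
            rw [pw_eq_right F G hc0.le le_rfl hc2, ← hFGc]
        · rw [pw_eq_right F G hc0.le le_rfl hc2, ← hFGc]
      have hr : HasDerivWithinAt (pw c F G) (G' c) (Set.Ico c (2*π)) c := by
        refine (hG c).hasDerivWithinAt.congr ?_ ?_
        · intro s hs; exact pw_eq_right F G (le_trans hc0.le hs.1) hs.1 hs.2
        · exact pw_eq_right F G hc0.le le_rfl hc2
      rw [hFGc'] at hl
      have hu := hl.union hr
      rw [Set.Icc_union_Ico_eq_Ico hc0.le hc2] at hu
      rw [pw_eq_right F' G' hc0.le le_rfl hc2]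
      exact hu.hasDerivAt (Filter.mem_of_superset
        (Ioo_mem_nhds hc0 hc2) Set.Ioo_subset_Ico_self)
    · -- interior of second piece
      have hmem : Set.Ioo c (2*π) ∈ nhds τ := isOpen_Ioo.mem_nhds ⟨hgt, h2⟩
      have heqn : pw c F G =ᶠ[nhds τ] G := by
        filter_upwards [hmem] with s hs
        exact pw_eq_right F G (lt_trans hc0 hs.1).le hs.1.le hs.2
      rw [pw_eq_right F' G' (lt_trans hc0 hgt).le hgt.le h2]
      exact (hG τ).congr_of_eventuallyEq heqn
  intro θ
  have hfr := frp_spec θ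
  set k : ℤ := ⌊θ/(2*π)⌋ with hkdef
  have hval : pw c F' G' (frp θ) = pw c F' G' θ := by
    rw [hfr]; exact pw_sub_int c F' G' θ k
  have h1 := main (frp θ) (frp_nonneg θ) (frp_lt θ)
  rw [hval, hfr] at h1
  have hin : HasDerivAt (fun z : ℝ => z - 2*π*(k:ℝ)) 1 θ := by
    simpa using (hasDerivAt_id θ).sub_const (2*π*(k:ℝ))
  have h2 := h1.comp θ hin
  have h2' : HasDerivAt (fun s => pw c F G (s - 2*π*(k:ℝ))) (pw c F' G' θ * 1) θ := h2
  have h3 : (fun s => pw c F G (s - 2*π*(k:ℝ))) = pw c F G :=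
    funext fun s => pw_sub_int c F G s k
  rw [h3] at h2'
  simpa using h2'

/-! The two pieces of the solution and their derivatives. -/

noncomputable def sinp (A ω d : ℝ) : ℝ → ℝ := fun t => A * Real.sin (ω*t + d)
noncomputable def cosp (A ω d : ℝ) : ℝ → ℝ := fun t => A * Real.cos (ω*t + d)

lemma sinp_deriv (A ω d t : ℝ) : HasDerivAt (sinp A ω d) (cosp (A*ω) ω d t) t := by
  have h1 : HasDerivAt (fun s : ℝ => ω*s + d) ω t := by
    simpa using ((hasDerivAt_id t).const_mul ω).add_const d
  have h := (h1.sin).const_mul A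
  unfold sinp cosp
  exact h.congr_deriv (by ring)

lemma cosp_deriv (A ω d t : ℝ) : HasDerivAt (cosp A ω d) (sinp (-(A*ω)) ω d t) t := by
  have h1 : HasDerivAt (fun s : ℝ => ω*s + d) ω t := by
    simpa using ((hasDerivAt_id t).const_mul ω).add_const d
  have h := (h1.cos).const_mul A
  unfold sinp cosp
  exact h.congr_deriv (by ring)

noncomputable def XF (ω ω₂ c A : ℝ) : ℝ → ℝ :=
  pw c (sinp A ω 0) (sinp (-(A*ω/ω₂)) ω₂ (-(ω₂*c)))
noncomputable def VF (ω ω₂ c A : ℝ) : ℝ → ℝ :=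
  pw c (cosp (A*ω) ω 0) (cosp (-(A*ω/ω₂)*ω₂) ω₂ (-(ω₂*c)))
noncomputable def WF (ω ω₂ c A : ℝ) : ℝ → ℝ :=
  pw c (sinp (-(A*ω*ω)) ω 0) (sinp (-(-(A*ω/ω₂)*ω₂*ω₂)) ω₂ (-(ω₂*c)))

lemma construct (ε ω ω₂ c A : ℝ) (hε : 0 ≤ ε) (hω : 0 < ω) (hω₂ : 0 < ω₂) (hA : 0 < A)
    (hc : ω * c = π) (hc2 : c < 2*π) (hk : ω₂ * (2*π - c) = π) (hsq : ω₂^2 = ω^2*(1+ε)) :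
    (∀ θ, HasDerivAt (XF ω ω₂ c A) (VF ω ω₂ c A θ) θ) ∧
    (∀ θ, HasDerivAt (VF ω ω₂ c A)
        (-(ω^2 * (XF ω ω₂ c A θ + ε * min (XF ω ω₂ c A θ) 0))) θ) ∧
    (∀ θ, XF ω ω₂ c A (θ + 2*π) = XF ω ω₂ c A θ) ∧ XF ω ω₂ c A 0 = 0 := by
  have hπ : (0:ℝ) < 2*π := by positivity
  have hc0 : 0 < c := by nlinarith [Real.pi_pos]
  have hω₂' : ω₂ ≠ 0 := ne_of_gt hω₂
  have harg : ω₂*(2*π) + -(ω₂*c) = π := by linear_combination hk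
  have e1 : sinp A ω 0 c = sinp (-(A*ω/ω₂)) ω₂ (-(ω₂*c)) c := by
    simp [sinp, hc]
  have e2 : cosp (A*ω) ω 0 c = cosp (-(A*ω/ω₂)*ω₂) ω₂ (-(ω₂*c)) c := by
    simp [cosp, hc]
    field_simp
  have e3 : sinp (-(A*ω/ω₂)) ω₂ (-(ω₂*c)) (2*π) = sinp A ω 0 0 := by
    simp [sinp, harg]
  have e4 : cosp (-(A*ω/ω₂)*ω₂) ω₂ (-(ω₂*c)) (2*π) = cosp (A*ω) ω 0 0 := by
    simp [cosp, harg]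
    field_simp
  have e2w : sinp (-(A*ω*ω)) ω 0 c = sinp (-(-(A*ω/ω₂)*ω₂*ω₂)) ω₂ (-(ω₂*c)) c := by
    simp [sinp, hc]
  have e4w : sinp (-(-(A*ω/ω₂)*ω₂*ω₂)) ω₂ (-(ω₂*c)) (2*π) = sinp (-(A*ω*ω)) ω 0 0 := by
    simp [sinp, harg]
  have hXd : ∀ θ, HasDerivAt (XF ω ω₂ c A) (VF ω ω₂ c A θ) θ :=
    pw_hasDerivAt hc0 hc2 (fun t => sinp_deriv A ω 0 t)
      (fun t => sinp_deriv (-(A*ω/ω₂)) ω₂ (-(ω₂*c)) t) e1 e2 e3 e4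
  have hVd0 : ∀ θ, HasDerivAt (VF ω ω₂ c A) (WF ω ω₂ c A θ) θ :=
    pw_hasDerivAt hc0 hc2 (fun t => cosp_deriv (A*ω) ω 0 t)
      (fun t => cosp_deriv (-(A*ω/ω₂)*ω₂) ω₂ (-(ω₂*c)) t) e2 e2w e4 e4w
  have hODE : ∀ θ, WF ω ω₂ c A θ
      = -(ω^2 * (XF ω ω₂ c A θ + ε * min (XF ω ω₂ c A θ) 0)) := by
    intro θ
    obtain ⟨t, ht0, ht2, hcase | hcase⟩ := pw_spec c θ
    · obtain ⟨htc, heq⟩ := hcase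
      have hX : XF ω ω₂ c A θ = A * Real.sin (ω*t + 0) := heq _ _
      have hW : WF ω ω₂ c A θ = -(A*ω*ω) * Real.sin (ω*t + 0) := heq _ _
      have hsin : 0 ≤ Real.sin (ω*t + 0) := by
        apply Real.sin_nonneg_of_nonneg_of_le_pi
        · rw [add_zero]; exact mul_nonneg hω.le ht0
        · rw [add_zero, ← hc]
          exact (mul_le_mul_iff_right₀ hω).2 htc.le
      have hmin : min (XF ω ω₂ c A θ) 0 = 0 := by
        rw [hX]; exact min_eq_right (mul_nonneg hA.le hsin)
      rw [hmin, hX, hW]; ring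
    · obtain ⟨hct, heq⟩ := hcase
      have hX : XF ω ω₂ c A θ = -(A*ω/ω₂) * Real.sin (ω₂*t + -(ω₂*c)) := heq _ _
      have hW : WF ω ω₂ c A θ
          = -(-(A*ω/ω₂)*ω₂*ω₂) * Real.sin (ω₂*t + -(ω₂*c)) := heq _ _
      have hsin : 0 ≤ Real.sin (ω₂*t + -(ω₂*c)) := by
        apply Real.sin_nonneg_of_nonneg_of_le_pi
        · nlinarith
        · nlinarith
      have hXle : XF ω ω₂ c A θ ≤ 0 := by
        rw [hX]
        apply mul_nonpos_of_nonpos_of_nonneg _ hsin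
        have : 0 < A*ω/ω₂ := by positivity
        linarith
      have hmin : min (XF ω ω₂ c A θ) 0 = XF ω ω₂ c A θ := min_eq_left hXle
      rw [hmin, hX, hW]
      have hωn : ω₂ ≠ 0 := hω₂'
      linear_combination (A*ω/ω₂ * Real.sin (ω₂*t + -(ω₂*c))) * hsq
  refine ⟨hXd, fun θ => ?_, fun θ => pw_periodic c _ _ θ, ?_⟩
  · rw [← hODE θ]; exact hVd0 θ
  · show pw c _ _ 0 = 0
    rw [pw_eq_left _ _ le_rfl hc0 hπ]
    simp [sinp]

lemma main_sol (ε a : ℝ) (hε : 0 ≤ ε) (ha : a ≠ 0) :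
    ∃ ω : ℝ, 1/2 < ω ∧ ω ≤ 1 ∧ (ε = 0 → ω = 1) ∧
      ∃ x v : ℝ → ℝ, (∀ θ, HasDerivAt x (v θ) θ) ∧
        (∀ θ, HasDerivAt v (-(ω^2 * (x θ + ε * min (x θ) 0))) θ) ∧
        x 0 = a ∧ v 0 = 0 ∧ (∀ θ, x (θ + 2*π) = x θ) ∧ (∃ θ₀, x θ₀ = 0) := by
  have h1ε : (0:ℝ) < 1 + ε := by linarith
  set s : ℝ := (Real.sqrt (1+ε))⁻¹ with hs_def
  have hsq1 : 1 ≤ Real.sqrt (1+ε) := by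
    nlinarith [Real.sq_sqrt h1ε.le, Real.sqrt_nonneg (1+ε)]
  have hs0 : 0 < s := inv_pos.2 (by linarith)
  have hs1 : s ≤ 1 := inv_le_one_of_one_le₀ hsq1
  have hss : s^2 * (1+ε) = 1 := by
    rw [hs_def, inv_pow, Real.sq_sqrt h1ε.le]
    exact inv_mul_cancel₀ h1ε.ne'
  set ω : ℝ := (1+s)/2 with hω_def
  set ω₂ : ℝ := (1+s)/(2*s) with hω₂_def
  have hω0 : 0 < ω := by rw [hω_def]; linarith
  have hω₂0 : 0 < ω₂ := by rw [hω₂_def]; exact div_pos (by linarith) (by linarith)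
  have hwhalf : 1/2 < ω := by rw [hω_def]; linarith
  have hω1 : ω ≤ 1 := by rw [hω_def]; linarith
  have hε0 : ε = 0 → ω = 1 := by
    intro h
    rw [hω_def, hs_def, h]
    norm_num
  have hrel : ω₂ * s = ω := by
    rw [hω₂_def, hω_def]
    field_simp
  have hsqr : ω₂^2 = ω^2 * (1+ε) := by
    linear_combination (-(ω₂^2))*hss + ((1+ε)*(ω₂*s+ω))*hrel
  set c : ℝ := π/ω with hc_def
  have hc : ω * c = π := by rw [hc_def]; field_simp
  have hc0 : 0 < c := by rw [hc_def]; positivity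
  have hc2 : c < 2*π := by
    rw [hc_def, div_lt_iff₀ hω0]
    nlinarith [Real.pi_pos]
  have hk : ω₂ * (2*π - c) = π := by
    rw [hω₂_def, hc_def, hω_def]
    have h1s : (0:ℝ) < 1 + s := by linarith
    field_simp
    ring
  have hπ : (0:ℝ) < 2*π := by positivity
  -- choose amplitude and phase according to the sign of a
  obtain ⟨A, φ, hApos, hXφ, hVφ⟩ : ∃ A φ : ℝ, 0 < A ∧
      XF ω ω₂ c A φ = a ∧ VF ω ω₂ c A φ = 0 := by
    rcases ha.lt_or_gt with haneg | hapos
    · refine ⟨(-a)*ω₂/ω, π + c/2,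
        div_pos (mul_pos (by linarith : (0:ℝ) < -a) hω₂0) hω0, ?_, ?_⟩
      · show pw c _ _ _ = a
        rw [pw_eq_right _ _ (by nlinarith [Real.pi_pos]) (by linarith) (by linarith)]
        unfold sinp
        rw [show ω₂*(π + c/2) + -(ω₂*c) = π/2 by linear_combination hk/2,
          Real.sin_pi_div_two, mul_one]
        field_simp
      · show pw c _ _ _ = 0
        rw [pw_eq_right _ _ (by nlinarith [Real.pi_pos]) (by linarith) (by linarith)]
        unfold cosp
        rw [show ω₂*(π + c/2) + -(ω₂*c) = π/2 by linear_combination hk/2,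
          Real.cos_pi_div_two, mul_zero]
    · refine ⟨a, c/2, hapos, ?_, ?_⟩
      · show pw c _ _ _ = a
        rw [pw_eq_left _ _ (by linarith) (by linarith) (by linarith)]
        unfold sinp
        rw [show ω*(c/2) + 0 = π/2 by linear_combination hc/2, Real.sin_pi_div_two, mul_one]
      · show pw c _ _ _ = 0
        rw [pw_eq_left _ _ (by linarith) (by linarith) (by linarith)]
        unfold cosp
        rw [show ω*(c/2) + 0 = π/2 by linear_combination hc/2, Real.cos_pi_div_two, mul_zero]
  obtain ⟨hXd, hVd, hXper, hX0⟩ :=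
    construct ε ω ω₂ c A hε hω0 hω₂0 hApos hc hc2 hk hsqr
  refine ⟨ω, hwhalf, hω1, hε0,
    fun θ => XF ω ω₂ c A (θ+φ), fun θ => VF ω ω₂ c A (θ+φ), ?_, ?_,
    by simpa using hXφ, by simpa using hVφ, ?_, ⟨-φ, by simpa using hX0⟩⟩
  · intro θ
    have hin : HasDerivAt (fun z : ℝ => z + φ) 1 θ := by
      simpa using (hasDerivAt_id θ).add_const φ
    have h := (hXd (θ+φ)).comp θ hin
    have h' : HasDerivAt (fun z => XF ω ω₂ c A (z+φ)) (VF ω ω₂ c A (θ+φ) * 1) θ := h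
    simpa using h'
  · intro θ
    have hin : HasDerivAt (fun z : ℝ => z + φ) 1 θ := by
      simpa using (hasDerivAt_id θ).add_const φ
    have h := (hVd (θ+φ)).comp θ hin
    have h' : HasDerivAt (fun z => VF ω ω₂ c A (z+φ))
        (-(ω^2 * (XF ω ω₂ c A (θ+φ) + ε * min (XF ω ω₂ c A (θ+φ)) 0)) * 1) θ := h
    simpa using h'
  · intro θ
    show XF ω ω₂ c A (θ + 2*π + φ) = XF ω ω₂ c A (θ + φ)
    rw [show θ + 2*π + φ = (θ+φ) + 2*π by ring]
    exact hXper (θ+φ)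

theorem stmt_15 (a : ℝ) (ha : a ≠ 0) :
    ∃ εbar ∈ Set.Ioo (0:ℝ) 1, ∀ ε ∈ Set.Icc (0:ℝ) εbar, ∃ η b : ℝ, 0 < 1 - ε * η ∧
      ∃ x : ℝ → ℝ, Differentiable ℝ x ∧ Differentiable ℝ (deriv x) ∧
        (∀ θ : ℝ,
          deriv (deriv x) θ + (1 - ε * η) * x θ + ε * (1 - ε * η) * min (x θ) 0 = 0) ∧
        x 0 = a ∧ deriv x 0 = ε * b ∧ (∀ θ : ℝ, x (θ + 2 * π) = x θ) ∧
        (∀ t : ℝ,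
          deriv (deriv (fun u : ℝ => x (u / Real.sqrt (1 - ε * η)))) t
            + x (t / Real.sqrt (1 - ε * η))
            + ε * min (x (t / Real.sqrt (1 - ε * η))) 0 = 0) ∧
        (∀ t : ℝ, x ((t + 2 * π * Real.sqrt (1 - ε * η)) / Real.sqrt (1 - ε * η))
            = x (t / Real.sqrt (1 - ε * η))) ∧
        (∃ t t' : ℝ, x (t / Real.sqrt (1 - ε * η)) ≠ x (t' / Real.sqrt (1 - ε * η))) := by
  refine ⟨1/2, ⟨by norm_num, by norm_num⟩, fun ε hε => ?_⟩
  obtain ⟨ω, hwhalf, hω1, hω0', x, v, hdx, hdv, hx0, hv0, hper, θ₀, hθ₀⟩ :=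
    main_sol ε a hε.1 ha
  have hωpos : 0 < ω := by linarith
  have hωne : ω ≠ 0 := ne_of_gt hωpos
  have hμ : 1 - ε * (if ε = 0 then 0 else (1-ω^2)/ε) = ω^2 := by
    split_ifs with h
    · rw [hω0' h, h]; norm_num
    · field_simp
      ring
  refine ⟨if ε = 0 then 0 else (1-ω^2)/ε, 0, ?_, ?_⟩
  · rw [hμ]; positivity
  have hsq : Real.sqrt (1 - ε * (if ε = 0 then 0 else (1-ω^2)/ε)) = ω := by
    rw [hμ]; exact Real.sqrt_sq hωpos.le
  have hderiv1 : deriv x = v := funext fun θ => (hdx θ).deriv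
  refine ⟨x, fun θ => (hdx θ).differentiableAt, ?_, ?_, hx0, ?_, hper, ?_, ?_, ?_⟩
  · rw [hderiv1]; exact fun θ => (hdv θ).differentiableAt
  · intro θ
    rw [hderiv1, (hdv θ).deriv, hμ]
    ring
  · rw [hderiv1, hv0]; ring
  · intro t
    rw [hsq]
    have hinner : ∀ u : ℝ, HasDerivAt (fun z : ℝ => z / ω) (1/ω) u := by
      intro u
      simpa using (hasDerivAt_id u).div_const ω
    have hy1 : ∀ u : ℝ, HasDerivAt (fun z => x (z/ω)) (v (u/ω) * (1/ω)) u := by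
      intro u
      have h := (hdx (u/ω)).comp u (hinner u)
      have h' : HasDerivAt (fun z => x (z/ω)) (v (u/ω) * (1/ω)) u := h
      exact h'
    have hyd : deriv (fun z => x (z/ω)) = fun u => v (u/ω) * (1/ω) :=
      funext fun u => (hy1 u).deriv
    rw [hyd]
    have hy2 : HasDerivAt (fun u => v (u/ω) * (1/ω))
        (-(ω^2 * (x (t/ω) + ε * min (x (t/ω)) 0)) * (1/ω) * (1/ω)) t := by
      have h := ((hdv (t/ω)).comp t (hinner t)).mul_const (1/ω)
      have h' : HasDerivAt (fun u => v (u/ω) * (1/ω))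
          (-(ω^2 * (x (t/ω) + ε * min (x (t/ω)) 0)) * (1/ω) * (1/ω)) t := h
      exact h'
    rw [hy2.deriv]
    field_simp
    ring
  · intro t
    rw [hsq, show (t + 2*π*ω)/ω = t/ω + 2*π by field_simp]
    exact hper (t/ω)
  · refine ⟨0, ω*θ₀, ?_⟩
    rw [hsq, zero_div, hx0, mul_div_cancel_left₀ θ₀ hωne, hθ₀]
    exact ha
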